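/- arXiv:0708.1571 — 2 statements merged into one kernel-verified Lean document; each statement's English description precedes it below -/
import Mathlib

section
/- Let f = (m, n, k) be an integer form with m > 0, n < 0 and discriminant Δ = k² - 4mn not a perfect square. Then exactly one of A f = (m, m+n+k, k+2m) and B f = (m+n+k, n, k+2n) again satisfies (m' > 0 and n' < 0): A f does iff m + n + k < 0, and B f does iff m + n + k > 0 (and m + n + k ≠ 0 since Δ is not a square). -/
def opA (f : ℤ × ℤ × ℤ) : ℤ × ℤ × ℤ := (f.1, f.1 + f.2.1 + f.2.2, f.2.2 + 2 * f.1)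

def opB (f : ℤ × ℤ × ℤ) : ℤ × ℤ × ℤ := (f.1 + f.2.1 + f.2.2, f.2.1, f.2.2 + 2 * f.2.1)

/-- A form lies in the region `H⁰` (first coefficient positive, second negative). -/
def inH0 (f : ℤ × ℤ × ℤ) : Prop := 0 < f.1 ∧ f.2.1 < 0

/-- Let `f = (m,n,k)` with `m > 0`, `n < 0` and non-square discriminant. Then
`m + n + k ≠ 0`, `A f ∈ H⁰ ↔ m + n + k < 0`, `B f ∈ H⁰ ↔ m + n + k > 0`, and
exactly one of `A f`, `B f` lies in `H⁰`. -/
theorem exactly_one_of_A_B_stays (m n k : ℤ) (hm : 0 < m) (hn : n < 0)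
    (hns : ¬ IsSquare (k ^ 2 - 4 * m * n)) :
    m + n + k ≠ 0 ∧
    (inH0 (opA (m, n, k)) ↔ m + n + k < 0) ∧
    (inH0 (opB (m, n, k)) ↔ 0 < m + n + k) ∧
    Xor' (inH0 (opA (m, n, k))) (inH0 (opB (m, n, k))) := by
  have h0 : m + n + k ≠ 0 := by
    intro h
    apply hns
    have hk : k = -(m + n) := by omega
    exact ⟨m - n, by rw [hk]; ring⟩
  simp only [inH0, opA, opB, Xor', Xor]
  refine ⟨h0, ?_, ?_, ?_⟩ <;> omega
end

section
/- For Δ = ρ² a perfect square (ρ a positive integer), the ρ forms with (K, D, S) = (ρ, r, r) for r = 0, 1, ..., ρ-1, i.e., the forms (m, n, k) = (r, 0, ρ), lie in pairwise distinct SL(2,ℤ)-orbits. -/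
def formVal (f : ℤ × ℤ × ℤ) (x y : ℤ) : ℤ :=
  f.1 * x ^ 2 + f.2.1 * y ^ 2 + f.2.2 * x * y

def inOrbit (f g : ℤ × ℤ × ℤ) : Prop :=
  ∃ a b c d : ℤ, a * d - b * c = 1 ∧
    ∀ x y : ℤ, formVal g x y = formVal f (a * x + b * y) (c * x + d * y)

/-- For `Δ = ρ²` a perfect square, the `ρ` forms `(m,n,k) = (r, 0, ρ)` (i.e.
`(K,D,S) = (ρ, r, r)`) for `r = 0, 1, …, ρ - 1` lie in pairwise distinct
`SL(2,ℤ)`-orbits. -/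
theorem square_discriminant_orbit_representatives_distinct
    (ρ : ℤ) (hρ : 0 < ρ) (r s : ℤ)
    (hr0 : 0 ≤ r) (hr : r < ρ) (hs0 : 0 ≤ s) (hs : s < ρ)
    (h : inOrbit (r, 0, ρ) (s, 0, ρ)) : r = s := by
  obtain ⟨a, b, c, d, hdet, hE⟩ := h
  have h1 := hE 1 0
  have h2 := hE 0 1
  have h3 := hE 1 1
  simp only [formVal] at h1 h2 h3
  have hb : b * (r * b + ρ * d) = 0 := by ring_nf; ring_nf at h2; linarith
  rcases mul_eq_zero.mp hb with hb0 | hk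
  · subst hb0
    have had : a * d = 1 := by linarith [hdet]
    have ha : a = 1 ∨ a = -1 := Int.isUnit_iff.mp (IsUnit.of_mul_eq_one d had)
    have ha2 : a ^ 2 = 1 := by rcases ha with h' | h' <;> simp [h']
    have hdvd : ρ ∣ s - r := ⟨a * c, by nlinarith [h1]⟩
    have := Int.eq_zero_of_abs_lt_dvd hdvd (by rw [abs_lt]; omega)
    omega
  · exfalso
    have h2ρ : (2 : ℤ) * ρ = 0 := by
      linear_combination h3 - h1 - h2 + 2 * a * hk - ρ * hdet
    omega
end
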